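/- Let v, w be two vertices of a staged tree in the same stage with children v₀,…,v_k and w₀,…,w_k matched so that θ(v,v_i) = θ(w,w_i). If v and w are in the same position, i.e. t(v) = t(w), and the tree is stratified, then t(v_i) = t(w_i) for all i ∈ {0,…,k}. -/

import Mathlib

open MvPolynomial

inductive STree (L : Type) where
  | leaf : STree L
  | node : List (L × STree L) → STree L

namespace STree

variable {L : Type}

def children : STree L → List (L × STree L)
  | .leaf => []
  | .node cs => cs

def paths : STree L → List (List L)
  | .leaf => [[]]
  | .node cs => cs.attach.flatMap (fun x => (paths x.1.2).map (fun p => x.1.1 :: p))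
termination_by t => sizeOf t
decreasing_by
  have h := List.sizeOf_lt_of_mem x.2
  obtain ⟨⟨l, c⟩, hm⟩ := x
  simp only [Prod.mk.sizeOf_spec] at h
  simp only [STree.node.sizeOf_spec]
  omega

noncomputable def tpoly (T : STree L) : MvPolynomial L ℝ :=
  ((paths T).map (fun p => (p.map X).prod)).sum

def outLabels (T : STree L) : List L := T.children.map Prod.fst

def SameStage (v w : STree L) : Prop := ∀ l, l ∈ v.outLabels ↔ l ∈ w.outLabels

inductive OccursAt : STree L → ℕ → STree L → Prop where
  | refl (T : STree L) : OccursAt T 0 T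
  | child {cs : List (L × STree L)} {l : L} {c v : STree L} {n : ℕ} :
      (l, c) ∈ cs → OccursAt c n v → OccursAt (.node cs) (n + 1) v

def IsStagedTree (T : STree L) : Prop :=
  (∀ n cs, OccursAt T n (.node cs) → cs ≠ [] ∧ (cs.map Prod.fst).Nodup) ∧
  (∀ n m v w, OccursAt T n v → OccursAt T m w →
    (SameStage v w ∨ ∀ l, ¬(l ∈ v.outLabels ∧ l ∈ w.outLabels)))

def Star (v w : STree L) : Prop :=
  ∀ l l' c c' d d', l ≠ l' →
    (l, c) ∈ v.children → (l', c') ∈ v.children →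
    (l, d) ∈ w.children → (l', d') ∈ w.children →
    tpoly c * tpoly d' = tpoly d * tpoly c'

def Balanced (T : STree L) : Prop :=
  ∀ n m v w, OccursAt T n v → OccursAt T m w → SameStage v w → Star v w

def Stratified (T : STree L) : Prop :=
  (∀ n m, OccursAt T n .leaf → OccursAt T m .leaf → n = m) ∧
  (∀ n m v w, OccursAt T n v → OccursAt T m w → SameStage v w → n = m)

lemma tpoly_node (cs : List (L × STree L)) :
    tpoly (STree.node cs) = (cs.map (fun x => X x.1 * tpoly x.2)).sum := by
  unfold tpoly
  rw [paths]
  rw [List.map_flatMap, List.flatMap, List.sum_flatten, List.map_map]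
  have : ∀ x : {x // x ∈ cs},
      (List.sum ∘ fun a : {x // x ∈ cs} =>
        List.map (fun p => (List.map X p).prod) (List.map (fun p => (a : L × STree L).1 :: p) (a : L × STree L).2.paths)) x
      = (fun y : L × STree L => (X y.1 : MvPolynomial L ℝ) * ((paths y.2).map (fun p => (p.map X).prod)).sum) x.val := by
    rintro ⟨⟨l, c⟩, hm⟩
    simp only [Function.comp, List.map_map]
    have h1 : (paths c).map ((fun p => ((p.map X).prod : MvPolynomial L ℝ)) ∘ (fun p => l :: p))
        = (paths c).map (fun p => X l * (p.map X).prod) := by simp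
    rw [h1, List.sum_map_mul_left]
  rw [List.map_congr_left (fun x _ => this x)]
  simp only [List.attach_map_val (l := cs) (f := fun y : L × STree L => (X y.1 : MvPolynomial L ℝ) * ((paths y.2).map (fun p => (p.map X).prod)).sum)]


lemma OccursAt.trans' {a b c : STree L} {n m : ℕ}
    (h1 : OccursAt a n b) : OccursAt b m c → OccursAt a (n + m) c := by
  induction h1 with
  | refl => intro h2; simpa using h2
  | child hm _ ih =>
    intro h2
    have := OccursAt.child hm (ih h2)
    rw [Nat.add_right_comm]
    exact this

lemma mem_path_outLabels : ∀ (u : STree L) (p : List L) (x : L), p ∈ paths u → x ∈ p →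
    ∃ m u', OccursAt u m u' ∧ x ∈ u'.outLabels
  | .leaf, p, x, hp, hx => by
    rw [paths] at hp; simp at hp; subst hp; simp at hx
  | .node cs, p, x, hp, hx => by
    rw [paths, List.mem_flatMap] at hp
    obtain ⟨⟨⟨l, c⟩, hm⟩, -, hp⟩ := hp
    rw [List.mem_map] at hp
    obtain ⟨q, hq, rfl⟩ := hp
    simp only at hq hx
    rcases List.mem_cons.mp hx with rfl | hx'
    · refine ⟨0, .node cs, .refl _, ?_⟩
      simp only [outLabels, children, List.mem_map]
      exact ⟨(x, c), hm, rfl⟩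
    · obtain ⟨m, u', h1, h2⟩ := mem_path_outLabels c q x hq hx'
      exact ⟨m + 1, u', .child hm h1, h2⟩
termination_by u => sizeOf u
decreasing_by
  have h := List.sizeOf_lt_of_mem hm
  simp only [Prod.mk.sizeOf_spec] at h
  simp only [STree.node.sizeOf_spec]
  omega

lemma aeval_tpoly_fixed (u : STree L) (f : L → MvPolynomial L ℝ)
    (hf : ∀ x, (∃ p ∈ paths u, x ∈ p) → f x = X x) :
    aeval f (tpoly u) = tpoly u := by
  unfold tpoly
  rw [map_list_sum, List.map_map]
  congr 1
  apply List.map_congr_left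
  intro p hp
  simp only [Function.comp]
  rw [map_list_prod, List.map_map]
  congr 1
  apply List.map_congr_left
  intro x hx
  simp only [Function.comp, aeval_X]
  exact hf x ⟨p, hp, hx⟩

lemma sum_select [DecidableEq L] {α : Type} (cs : List (L × α)) (h : α → MvPolynomial L ℝ)
    (l : L) (c : α) (hnd : (cs.map Prod.fst).Nodup) (hm : (l, c) ∈ cs) :
    (cs.map (fun x => (if x.1 = l then 1 else 0) * h x.2)).sum = h c := by
  induction cs with
  | nil => simp at hm
  | cons a cs ih =>
    simp only [List.map_cons, List.sum_cons]
    rw [List.map_cons, List.nodup_cons] at hnd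
    rcases List.mem_cons.mp hm with rfl | hm'
    · 
      have hz : (cs.map (fun x => (if x.1 = l then (1 : MvPolynomial L ℝ) else 0) * h x.2)).sum = 0 := by
        apply List.sum_eq_zero
        intro y hy
        rw [List.mem_map] at hy
        obtain ⟨x, hx, rfl⟩ := hy
        have hne : x.1 ≠ l := by
          intro h'
          apply hnd.1
          have := List.mem_map_of_mem (f := Prod.fst) hx
          rwa [h'] at this
        simp [hne]
      rw [hz, add_zero, if_pos rfl, one_mul]
    · have hne : a.1 ≠ l := by
        intro h'
        apply hnd.1
        rw [h']
        exact List.mem_map_of_mem (f := Prod.fst) hm'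
      rw [if_neg hne, zero_mul, zero_add]
      exact ih hnd.2 hm'


end STree

open STree in
theorem stmt12 {L : Type} (T : STree L) (hst : IsStagedTree T) (hS : Stratified T)
    {n n' : ℕ} {v w : STree L} (hv : OccursAt T n v) (hw : OccursAt T n' w)
    (hss : SameStage v w) (hpos : tpoly v = tpoly w) :
    ∀ l c d, (l, c) ∈ v.children → (l, d) ∈ w.children → tpoly c = tpoly d := by
  classical
  intro l c d hc hd
  cases v with
  | leaf => simp [children] at hc
  | node cs =>
  cases w with
  | leaf => simp [children] at hd
  | node ds =>
  simp only [children] at hc hd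
  have hnd_v : (cs.map Prod.fst).Nodup := (hst.1 n cs hv).2
  have hnd_w : (ds.map Prod.fst).Nodup := (hst.1 n' ds hw).2
  have hnn' : n' = n := (hS.2 n n' _ _ hv hw hss).symm
  rw [hnn'] at hw
  set g : L → MvPolynomial L ℝ :=
    fun x => if x = l then 1 else if x ∈ outLabels (STree.node cs) then 0 else X x with hg
  have hlmem : l ∈ outLabels (STree.node cs) := by
    simp only [outLabels, children, List.mem_map]
    exact ⟨(l, c), hc, rfl⟩
  have noocc : ∀ (c' : STree L), OccursAt T (n + 1) c' → aeval g (tpoly c') = tpoly c' := by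
    intro c' hk
    apply aeval_tpoly_fixed
    rintro x ⟨p, hp, hx⟩
    obtain ⟨m, u', h1, h2⟩ := mem_path_outLabels c' p x hp hx
    have hu' : OccursAt T (n + 1 + m) u' := hk.trans' h1
    have hxS : x ∉ outLabels (STree.node cs) := by
      intro hxs
      rcases hst.2 n (n + 1 + m) _ _ hv hu' with hsame | hdisj
      · have := hS.2 _ _ _ _ hv hu' hsame
        omega
      · exact hdisj x ⟨hxs, h2⟩
    have hxl : x ≠ l := fun h' => hxS (h' ▸ hlmem)
    simp [hg, hxl, hxS]
  have heval : ∀ (es : List (L × STree L)), (∀ y ∈ es, y.1 ∈ outLabels (STree.node cs)) →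
      (∀ y : L × STree L, y ∈ es → OccursAt T (n + 1) y.2) →
      aeval g (tpoly (STree.node es)) = (es.map (fun x => (if x.1 = l then 1 else 0) * tpoly x.2)).sum := by
    intro es hlab hocc
    rw [tpoly_node, map_list_sum, List.map_map]
    congr 1
    apply List.map_congr_left
    intro x hx
    simp only [Function.comp, map_mul, aeval_X]
    rw [noocc x.2 (hocc x hx)]
    congr 1
    have hxS := hlab x hx
    by_cases h : x.1 = l <;> simp [hg, h, hxS]
  have hoccv : ∀ y : L × STree L, y ∈ cs → OccursAt T (n + 1) y.2 := by
    rintro ⟨l', c'⟩ hy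
    exact hv.trans' (OccursAt.child hy (OccursAt.refl c'))
  have hoccw : ∀ y : L × STree L, y ∈ ds → OccursAt T (n + 1) y.2 := by
    rintro ⟨l', d'⟩ hy
    exact hw.trans' (OccursAt.child hy (OccursAt.refl d'))
  have hlabv : ∀ y ∈ cs, y.1 ∈ outLabels (STree.node cs) := by
    intro y hy
    simp only [outLabels, children, List.mem_map]
    exact ⟨y, hy, rfl⟩
  have hlabw : ∀ y ∈ ds, y.1 ∈ outLabels (STree.node cs) := by
    intro y hy
    rw [hss y.1]
    simp only [outLabels, children, List.mem_map]
    exact ⟨y, hy, rfl⟩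
  have e1 : aeval g (tpoly (STree.node cs)) = tpoly c := by
    rw [heval cs hlabv hoccv]
    exact sum_select cs tpoly l c hnd_v hc
  have e2 : aeval g (tpoly (STree.node ds)) = tpoly d := by
    rw [heval ds hlabw hoccw]
    exact sum_select ds tpoly l d hnd_w hd
  rw [← e1, ← e2, hpos]
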